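/- The bipartite OTOC equals the operator entanglement of the evolution: for any unitary U on H_A ⊗ H_B, G_U = 1 − Tr(σ_U²), where σ_U = Tr_{BB'}(|U⟩⟨U|) and |U⟩ = (U ⊗ I)|φ⁺⟩ with |φ⁺⟩ = d^{−1/2} Σ_{i=1}^{d} |i⟩|i⟩ the maximally entangled state on H ⊗ H'. -/

import Mathlib

open Matrix Kronecker BigOperators

noncomputable section

/-- The swap `S_{AA'}` of the two `A` factors in `(H_A ⊗ H_B)^{⊗2}`. -/
def SAA (dA dB : ℕ) :
    Matrix ((Fin dA × Fin dB) × (Fin dA × Fin dB)) ((Fin dA × Fin dB) × (Fin dA × Fin dB)) ℂ :=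
  Matrix.of fun p q =>
    if p.1.1 = q.2.1 ∧ p.2.1 = q.1.1 ∧ p.1.2 = q.1.2 ∧ p.2.2 = q.2.2 then 1 else 0

/-- The bipartite OTOC `G_U = 1 − (1/d²) Tr(S_{AA'} U^{⊗2} S_{AA'} U^{†⊗2})`. -/
def Greal (dA dB : ℕ) (U : Matrix (Fin dA × Fin dB) (Fin dA × Fin dB) ℂ) : ℝ :=
  1 - (1 / ((dA * dB : ℝ))^2) *
    (Matrix.trace (SAA dA dB * (U ⊗ₖ U) * SAA dA dB * (Uᴴ ⊗ₖ Uᴴ))).re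

/-- The maximally entangled state `|φ⁺⟩ = d^{−1/2} Σ_i |i⟩|i⟩` on `H ⊗ H'`. -/
def phiPlus (dA dB : ℕ) : (Fin dA × Fin dB) × (Fin dA × Fin dB) → ℂ :=
  fun p => if p.1 = p.2 then ((Real.sqrt (dA * dB) : ℂ))⁻¹ else 0

/-- The vectorized evolution `|U⟩ = (U ⊗ I)|φ⁺⟩`. -/
def vecU (dA dB : ℕ) (U : Matrix (Fin dA × Fin dB) (Fin dA × Fin dB) ℂ) :
    (Fin dA × Fin dB) × (Fin dA × Fin dB) → ℂ :=
  Matrix.mulVec (U ⊗ₖ (1 : Matrix (Fin dA × Fin dB) (Fin dA × Fin dB) ℂ)) (phiPlus dA dB)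

/-- `σ_U = Tr_{BB'}(|U⟩⟨U|)`, the reduced state of `|U⟩` on `AA'`. -/
def sigmaU (dA dB : ℕ) (U : Matrix (Fin dA × Fin dB) (Fin dA × Fin dB) ℂ) :
    Matrix (Fin dA × Fin dA) (Fin dA × Fin dA) ℂ :=
  Matrix.of fun p q => ∑ b : Fin dB, ∑ b' : Fin dB,
    vecU dA dB U ((p.1, b), (p.2, b')) * star (vecU dA dB U ((q.1, b), (q.2, b')))


lemma vecU_apply (dA dB : ℕ) (U : Matrix (Fin dA × Fin dB) (Fin dA × Fin dB) ℂ)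
    (p : (Fin dA × Fin dB) × (Fin dA × Fin dB)) :
    vecU dA dB U p = U p.1 p.2 * ((Real.sqrt (dA * dB) : ℂ))⁻¹ := by
  simp only [vecU, Matrix.mulVec, dotProduct, phiPlus, Matrix.kroneckerMap_apply,
    Matrix.one_apply]
  rw [Fintype.sum_prod_type]
  simp [mul_ite, ite_and]

lemma SAA_mul_apply (dA dB : ℕ)
    (M : Matrix ((Fin dA × Fin dB) × (Fin dA × Fin dB)) ((Fin dA × Fin dB) × (Fin dA × Fin dB)) ℂ)
    (p q : (Fin dA × Fin dB) × (Fin dA × Fin dB)) :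
    (SAA dA dB * M) p q = M ((p.2.1, p.1.2), (p.1.1, p.2.2)) q := by
  simp only [Matrix.mul_apply, SAA, Matrix.of_apply, ite_mul, one_mul, zero_mul]
  rw [Fintype.sum_prod_type]
  simp [Fintype.sum_prod_type, ite_and]

lemma mul_SAA_apply (dA dB : ℕ)
    (M : Matrix ((Fin dA × Fin dB) × (Fin dA × Fin dB)) ((Fin dA × Fin dB) × (Fin dA × Fin dB)) ℂ)
    (p q : (Fin dA × Fin dB) × (Fin dA × Fin dB)) :
    (M * SAA dA dB) p q = M p ((q.2.1, q.1.2), (q.1.1, q.2.2)) := by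
  simp only [Matrix.mul_apply, SAA, Matrix.of_apply, mul_ite, mul_one, mul_zero]
  rw [Fintype.sum_prod_type]
  simp [Fintype.sum_prod_type, ite_and]

def Ssum (dA dB : ℕ) (U : Matrix (Fin dA × Fin dB) (Fin dA × Fin dB) ℂ) : ℂ :=
  ∑ x : ((Fin dA × Fin dA) × (Fin dA × Fin dA)) × ((Fin dB × Fin dB) × (Fin dB × Fin dB)),
    U (x.1.1.1, x.2.2.1) (x.1.1.2, x.2.2.2) * star (U (x.1.2.1, x.2.2.1) (x.1.2.2, x.2.2.2)) *
    (U (x.1.2.1, x.2.1.1) (x.1.2.2, x.2.1.2) * star (U (x.1.1.1, x.2.1.1) (x.1.1.2, x.2.1.2)))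

set_option maxHeartbeats 2000000 in
lemma trace_lhs (dA dB : ℕ) (U : Matrix (Fin dA × Fin dB) (Fin dA × Fin dB) ℂ) :
    Matrix.trace (SAA dA dB * (U ⊗ₖ U) * SAA dA dB * (Uᴴ ⊗ₖ Uᴴ)) = Ssum dA dB U := by
  have h : ∀ p q, (SAA dA dB * (U ⊗ₖ U) * SAA dA dB) p q
      = (U ⊗ₖ U) ((p.2.1, p.1.2), (p.1.1, p.2.2)) ((q.2.1, q.1.2), (q.1.1, q.2.2)) := by
    intro p q
    rw [mul_SAA_apply, SAA_mul_apply]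
  simp only [Matrix.trace, Matrix.diag, Matrix.mul_apply, h, Matrix.kroneckerMap_apply,
    Matrix.conjTranspose_apply]
  trans (∑ z : ((Fin dA × Fin dB) × (Fin dA × Fin dB)) × ((Fin dA × Fin dB) × (Fin dA × Fin dB)),
      U (z.1.2.1, z.1.1.2) (z.2.2.1, z.2.1.2) * U (z.1.1.1, z.1.2.2) (z.2.1.1, z.2.2.2) *
        (star (U z.1.1 z.2.1) * star (U z.1.2 z.2.2)))
  · exact (Fintype.sum_prod_type (fun z : ((Fin dA × Fin dB) × (Fin dA × Fin dB)) × ((Fin dA × Fin dB) × (Fin dA × Fin dB)) =>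
      U (z.1.2.1, z.1.1.2) (z.2.2.1, z.2.1.2) * U (z.1.1.1, z.1.2.2) (z.2.1.1, z.2.2.2) *
        (star (U z.1.1 z.2.1) * star (U z.1.2 z.2.2)))).symm
  simp only [Ssum]
  refine Fintype.sum_equiv
    ⟨fun y => (((y.1.2.1, y.2.2.1), (y.1.1.1, y.2.1.1)), ((y.1.2.2, y.2.2.2), (y.1.1.2, y.2.1.2))),
     fun x => (((x.1.2.1, x.2.2.1), (x.1.1.1, x.2.1.1)), ((x.1.2.2, x.2.2.2), (x.1.1.2, x.2.1.2))),
     fun _ => rfl, fun _ => rfl⟩ _ _ fun z => ?_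
  simp only [Equiv.coe_fn_mk]
  ring

lemma sigmaU_apply (dA dB : ℕ) (U : Matrix (Fin dA × Fin dB) (Fin dA × Fin dB) ℂ)
    (p q : Fin dA × Fin dA) :
    sigmaU dA dB U p q = (((dA * dB : ℝ)) : ℂ)⁻¹ *
      ∑ b : Fin dB, ∑ b' : Fin dB, U (p.1, b) (p.2, b') * star (U (q.1, b) (q.2, b')) := by
  have hc : ((Real.sqrt (dA * dB) : ℝ) : ℂ)⁻¹ * star ((Real.sqrt (dA * dB) : ℝ) : ℂ)⁻¹
      = (((dA * dB : ℝ)) : ℂ)⁻¹ := by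
    rw [star_inv₀]
    rw [show star ((Real.sqrt (dA * dB) : ℝ) : ℂ) = ((Real.sqrt (dA * dB) : ℝ) : ℂ) from
      Complex.conj_ofReal _]
    rw [← mul_inv, ← Complex.ofReal_mul, Real.mul_self_sqrt (by positivity)]
  simp only [sigmaU, Matrix.of_apply, vecU_apply, star_mul']
  rw [Finset.mul_sum]
  refine Finset.sum_congr rfl fun b _ => ?_
  rw [Finset.mul_sum]
  refine Finset.sum_congr rfl fun b' _ => ?_
  rw [← hc]
  ring

set_option maxHeartbeats 2000000 in
lemma trace_rhs (dA dB : ℕ) (U : Matrix (Fin dA × Fin dB) (Fin dA × Fin dB) ℂ) :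
    Matrix.trace (sigmaU dA dB U * sigmaU dA dB U)
      = ((((dA * dB : ℝ)) : ℂ) ^ 2)⁻¹ * Ssum dA dB U := by
  rw [sq, mul_inv]
  simp only [Matrix.trace, Matrix.diag, Matrix.mul_apply, sigmaU_apply, Ssum]
  simp only [Fintype.sum_prod_type, Finset.mul_sum, Finset.sum_mul]
  refine Finset.sum_congr rfl fun _ _ => ?_
  refine Finset.sum_congr rfl fun _ _ => ?_
  refine Finset.sum_congr rfl fun _ _ => ?_
  refine Finset.sum_congr rfl fun _ _ => ?_
  refine Finset.sum_congr rfl fun _ _ => ?_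
  refine Finset.sum_congr rfl fun _ _ => ?_
  refine Finset.sum_congr rfl fun _ _ => ?_
  refine Finset.sum_congr rfl fun _ _ => ?_
  ring


/-- The bipartite OTOC equals the operator entanglement of the evolution:
`G_U = 1 − Tr(σ_U²)`. -/
theorem otoc_eq_operator_entanglement (dA dB : ℕ) (hA : 0 < dA) (hB : 0 < dB)
    (U : Matrix (Fin dA × Fin dB) (Fin dA × Fin dB) ℂ)
    (hU : U ∈ Matrix.unitaryGroup (Fin dA × Fin dB) ℂ) :
    Greal dA dB U = 1 - (Matrix.trace (sigmaU dA dB U * sigmaU dA dB U)).re := by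
  rw [Greal, trace_lhs, trace_rhs]
  have h : ((((dA * dB : ℝ)) : ℂ) ^ 2)⁻¹ = ((((dA * dB : ℝ)) ^ 2)⁻¹ : ℝ) := by
    push_cast; ring
  rw [h, Complex.re_ofReal_mul]
  ring
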